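/- Soundness of the MILL sequent calculus: if the sequent Γ ⊢ A is derivable in the MILL sequent calculus, then in every modal Kripke resource model, e ⊨ Γ* ⊸ A. -/

import Mathlib

/-- Formulas of modal intuitionistic linear logic (MILL): atoms, 1, ⊗, &, ⊸, □. -/
inductive Fm : Type where
  | atom : ℕ → Fm
  | one : Fm
  | tensor : Fm → Fm → Fm
  | and : Fm → Fm → Fm
  | limp : Fm → Fm → Fm
  | box : Fm → Fm

/-- Raw data of a modal Kripke resource frame/model. -/
structure KFrame where
  W : Type
  e : W
  mul : W → W → W
  ge : W → W → Prop
  N : W → Set (Set W)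
  V : ℕ → Set W

/-- Truth at a world of a modal Kripke resource model. -/
def sat (F : KFrame) : F.W → Fm → Prop
  | m, .atom p => m ∈ F.V p
  | m, .one => F.ge m F.e
  | m, .tensor A B => ∃ m1 m2, F.ge m (F.mul m1 m2) ∧ sat F m1 A ∧ sat F m2 B
  | m, .and A B => sat F m A ∧ sat F m B
  | m, .limp A B => ∀ n, sat F n A → sat F (F.mul n m) B
  | m, .box A => {n | sat F n A} ∈ F.N m

/-- The axioms making the data a modal Kripke resource model:
commutative monoid, preorder, bifunctoriality, hereditary valuation,
and heredity of the neighbourhood function. -/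
def IsMKRM (F : KFrame) : Prop :=
  (∀ a b, F.mul a b = F.mul b a) ∧
  (∀ a b c, F.mul (F.mul a b) c = F.mul a (F.mul b c)) ∧
  (∀ a, F.mul a F.e = a) ∧
  (∀ a, F.ge a a) ∧
  (∀ a b c, F.ge a b → F.ge b c → F.ge a c) ∧
  (∀ m n m' n', F.ge m n → F.ge m' n' → F.ge (F.mul m m') (F.mul n n')) ∧
  (∀ p m n, m ∈ F.V p → F.ge n m → n ∈ F.V p) ∧
  (∀ X m n, X ∈ F.N m → F.ge n m → X ∈ F.N n)

/-- The MILL sequent calculus over multisets of formulas. -/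
inductive Der : Multiset Fm → Fm → Prop where
  | ax (A : Fm) : Der {A} A
  | cut {Γ Γ' : Multiset Fm} {A C : Fm} :
      Der (A ::ₘ Γ) C → Der Γ' A → Der (Γ + Γ') C
  | tensorL {Γ : Multiset Fm} {A B C : Fm} :
      Der (A ::ₘ B ::ₘ Γ) C → Der (Fm.tensor A B ::ₘ Γ) C
  | tensorR {Γ Γ' : Multiset Fm} {A B : Fm} :
      Der Γ A → Der Γ' B → Der (Γ + Γ') (Fm.tensor A B)
  | limpL {Γ Γ' : Multiset Fm} {A B C : Fm} :
      Der Γ A → Der (B ::ₘ Γ') C → Der (Fm.limp A B ::ₘ (Γ + Γ')) C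
  | limpR {Γ : Multiset Fm} {A B : Fm} :
      Der (A ::ₘ Γ) B → Der Γ (Fm.limp A B)
  | andL1 {Γ : Multiset Fm} {A B C : Fm} :
      Der (A ::ₘ Γ) C → Der (Fm.and A B ::ₘ Γ) C
  | andL2 {Γ : Multiset Fm} {A B C : Fm} :
      Der (B ::ₘ Γ) C → Der (Fm.and A B ::ₘ Γ) C
  | andR {Γ : Multiset Fm} {A B : Fm} :
      Der Γ A → Der Γ B → Der Γ (Fm.and A B)
  | oneL {Γ : Multiset Fm} {C : Fm} :
      Der Γ C → Der (Fm.one ::ₘ Γ) C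
  | oneR : Der 0 Fm.one
  | boxRe {A B : Fm} :
      Der {A} B → Der {B} A → Der {Fm.box A} (Fm.box B)

/-- Tensor of a list of formulas (empty list ↦ 1, singleton ↦ the formula). -/
def listStar : List Fm → Fm
  | [] => Fm.one
  | [A] => A
  | A :: l => Fm.tensor A (listStar l)

/-- Γ*: the tensor of all the formulas in the multiset Γ, with ∅* = 1. -/
noncomputable def star (Γ : Multiset Fm) : Fm := listStar Γ.toList

/-- Auxiliary: a world covers a list of formulas. -/
def covers (F : KFrame) : F.W → List Fm → Prop
  | m, [] => F.ge m F.e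
  | m, A :: l => ∃ m1 m2, F.ge m (F.mul m1 m2) ∧ sat F m1 A ∧ covers F m2 l

section Aux
variable {F : KFrame}

lemma heredity (hF : IsMKRM F) :
    ∀ (A : Fm) {m n : F.W}, sat F m A → F.ge n m → sat F n A := by
  obtain ⟨hcomm, hassoc, hunit, hrefl, htrans, hbi, hV, hN⟩ := id hF
  intro A
  induction A with
  | atom p => intro m n h hg; exact hV p m n h hg
  | one => intro m n h hg; exact htrans _ _ _ hg h
  | tensor A B ihA ihB =>
      rintro m n ⟨m1, m2, hg1, hA, hB⟩ hg
      exact ⟨m1, m2, htrans _ _ _ hg hg1, hA, hB⟩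
  | and A B ihA ihB => rintro m n ⟨hA, hB⟩ hg; exact ⟨ihA hA hg, ihB hB hg⟩
  | limp A B ihA ihB =>
      intro m n h hg k hk
      exact ihB (h k hk) (hbi _ _ _ _ (hrefl k) hg)
  | box A ih => intro m n h hg; exact hN _ _ _ h hg

lemma covers_mono (hF : IsMKRM F) :
    ∀ (l : List Fm) {m n : F.W}, covers F m l → F.ge n m → covers F n l := by
  obtain ⟨hcomm, hassoc, hunit, hrefl, htrans, hbi, hV, hN⟩ := id hF
  rintro (_ | ⟨A, l⟩) m n h hg
  · exact htrans _ _ _ hg h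
  · obtain ⟨m1, m2, h1, h2, h3⟩ := h
    exact ⟨m1, m2, htrans _ _ _ hg h1, h2, h3⟩

lemma covers_perm (hF : IsMKRM F) {l l' : List Fm} (hp : l.Perm l') :
    ∀ m, covers F m l → covers F m l' := by
  obtain ⟨hcomm, hassoc, hunit, hrefl, htrans, hbi, hV, hN⟩ := id hF
  induction hp with
  | nil => exact fun m h => h
  | cons A hp ih =>
      rintro m ⟨m1, m2, h1, h2, h3⟩
      exact ⟨m1, m2, h1, h2, ih m2 h3⟩
  | swap A B l =>
      rintro m ⟨a, b, h1, hB, c, d, h2, hA, hc⟩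
      refine ⟨c, F.mul a d, ?_, hA, a, d, hrefl _, hB, hc⟩
      have e1 : F.mul a (F.mul c d) = F.mul c (F.mul a d) := by
        rw [← hassoc, hcomm a c, hassoc]
      have := htrans _ _ _ h1 (hbi _ _ _ _ (hrefl a) h2)
      rwa [e1] at this
  | trans hp1 hp2 ih1 ih2 => exact fun m h => ih2 m (ih1 m h)

lemma covers_append (hF : IsMKRM F) :
    ∀ (l1 l2 : List Fm) (m : F.W),
      covers F m (l1 ++ l2) ↔
        ∃ m1 m2, F.ge m (F.mul m1 m2) ∧ covers F m1 l1 ∧ covers F m2 l2 := by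
  obtain ⟨hcomm, hassoc, hunit, hrefl, htrans, hbi, hV, hN⟩ := id hF
  intro l1
  induction l1 with
  | nil =>
      intro l2 m
      constructor
      · intro h
        refine ⟨F.e, m, ?_, hrefl _, h⟩
        have : F.mul F.e m = m := by rw [hcomm, hunit]
        rw [this]; exact hrefl m
      · rintro ⟨m1, m2, h1, h2, h3⟩
        have h4 : F.ge m (F.mul F.e m2) := htrans _ _ _ h1 (hbi _ _ _ _ h2 (hrefl m2))
        have : F.mul F.e m2 = m2 := by rw [hcomm, hunit]
        rw [this] at h4
        exact covers_mono hF l2 h3 h4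
  | cons A l1 ih =>
      intro l2 m
      constructor
      · rintro ⟨a, b, h1, hA, hb⟩
        obtain ⟨c, d, h2, hc, hd⟩ := (ih l2 b).mp hb
        refine ⟨F.mul a c, d, ?_, ⟨a, c, hrefl _, hA, hc⟩, hd⟩
        have := htrans _ _ _ h1 (hbi _ _ _ _ (hrefl a) h2)
        rwa [← hassoc] at this
      · rintro ⟨m1, m2, h1, ⟨a, b, h2, hA, hb⟩, h3⟩
        refine ⟨a, F.mul b m2, ?_, hA, (ih l2 _).mpr ⟨b, m2, hrefl _, hb, h3⟩⟩
        have := htrans _ _ _ h1 (hbi _ _ _ _ h2 (hrefl m2))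
        rwa [hassoc] at this

lemma sat_listStar (hF : IsMKRM F) :
    ∀ (l : List Fm) (m : F.W), sat F m (listStar l) ↔ covers F m l := by
  obtain ⟨hcomm, hassoc, hunit, hrefl, htrans, hbi, hV, hN⟩ := id hF
  intro l
  induction l with
  | nil => intro m; exact Iff.rfl
  | cons A l ih =>
      intro m
      cases l with
      | nil =>
          simp only [listStar, covers]
          constructor
          · intro h
            refine ⟨m, F.e, ?_, h, hrefl _⟩
            rw [hunit]; exact hrefl m
          · rintro ⟨a, b, h1, h2, h3⟩
            have h4 : F.ge m (F.mul a F.e) := htrans _ _ _ h1 (hbi _ _ _ _ (hrefl a) h3)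
            rw [hunit] at h4
            exact heredity hF A h2 h4
      | cons B t =>
          constructor
          · rintro ⟨m1, m2, h1, h2, h3⟩
            exact ⟨m1, m2, h1, h2, (ih m2).mp h3⟩
          · rintro ⟨m1, m2, h1, h2, h3⟩
            exact ⟨m1, m2, h1, h2, (ih m2).mpr h3⟩

lemma toList_cons_perm (A : Fm) (Γ : Multiset Fm) :
    (A ::ₘ Γ).toList.Perm (A :: Γ.toList) := by
  rw [← Multiset.coe_eq_coe, Multiset.coe_toList, ← Multiset.cons_coe, Multiset.coe_toList]

lemma toList_add_perm (Γ Γ' : Multiset Fm) :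
    (Γ + Γ').toList.Perm (Γ.toList ++ Γ'.toList) := by
  rw [← Multiset.coe_eq_coe, Multiset.coe_toList, ← Multiset.coe_add,
    Multiset.coe_toList, Multiset.coe_toList]

lemma covers_singleton (hF : IsMKRM F) {A : Fm} {m : F.W} (h : sat F m A) :
    covers F m ({A} : Multiset Fm).toList := by
  obtain ⟨hcomm, hassoc, hunit, hrefl, htrans, hbi, hV, hN⟩ := id hF
  apply covers_perm hF (toList_cons_perm A 0).symm
  refine ⟨m, F.e, ?_, h, by simp [Multiset.toList_zero, covers, hrefl]⟩
  rw [hunit]; exact hrefl m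

end Aux

lemma der_sound {Γ : Multiset Fm} {A : Fm} (h : Der Γ A) :
    ∀ F : KFrame, IsMKRM F → ∀ m, covers F m Γ.toList → sat F m A := by
  induction h with
  | ax A =>
      intro F hF m hm
      obtain ⟨hcomm, hassoc, hunit, hrefl, htrans, hbi, hV, hN⟩ := id hF
      have hm' := covers_perm hF (toList_cons_perm A 0) m hm
      obtain ⟨a, b, h1, h2, h3⟩ := hm'
      simp only [Multiset.toList_zero, covers] at h3
      have h4 : F.ge m (F.mul a F.e) := htrans _ _ _ h1 (hbi _ _ _ _ (hrefl a) h3)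
      rw [hunit] at h4
      exact heredity hF A h2 h4
  | @cut Γ Γ' A C _ _ ih1 ih2 =>
      intro F hF m hm
      obtain ⟨hcomm, hassoc, hunit, hrefl, htrans, hbi, hV, hN⟩ := id hF
      have hm' := covers_perm hF (toList_add_perm Γ Γ') m hm
      obtain ⟨m1, m2, h1, h2, h3⟩ := (covers_append hF _ _ _).mp hm'
      have hA := ih2 F hF m2 h3
      apply ih1 F hF m
      apply covers_perm hF (toList_cons_perm A Γ).symm
      refine ⟨m2, m1, ?_, hA, h2⟩
      rwa [hcomm]
  | @tensorL Γ A B C _ ih =>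
      intro F hF m hm
      obtain ⟨hcomm, hassoc, hunit, hrefl, htrans, hbi, hV, hN⟩ := id hF
      have hm' := covers_perm hF (toList_cons_perm _ Γ) m hm
      obtain ⟨a, b, h1, ⟨c, d, h2, hA, hB⟩, h3⟩ := hm'
      apply ih F hF m
      apply covers_perm hF (toList_cons_perm A (B ::ₘ Γ)).symm
      refine ⟨c, F.mul d b, ?_, hA, ?_⟩
      · have := htrans _ _ _ h1 (hbi _ _ _ _ h2 (hrefl b))
        rwa [hassoc] at this
      · exact covers_perm hF (toList_cons_perm B Γ).symm _ ⟨d, b, hrefl _, hB, h3⟩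
  | @tensorR Γ Γ' A B _ _ ih1 ih2 =>
      intro F hF m hm
      have hm' := covers_perm hF (toList_add_perm Γ Γ') m hm
      obtain ⟨m1, m2, h1, h2, h3⟩ := (covers_append hF _ _ _).mp hm'
      exact ⟨m1, m2, h1, ih1 F hF m1 h2, ih2 F hF m2 h3⟩
  | @limpL Γ Γ' A B C _ _ ih1 ih2 =>
      intro F hF m hm
      obtain ⟨hcomm, hassoc, hunit, hrefl, htrans, hbi, hV, hN⟩ := id hF
      have hm' := covers_perm hF (toList_cons_perm _ (Γ + Γ')) m hm
      obtain ⟨a, b, h1, hlimp, hb⟩ := hm'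
      have hb' := covers_perm hF (toList_add_perm Γ Γ') b hb
      obtain ⟨b1, b2, h2, hb1, hb2⟩ := (covers_append hF _ _ _).mp hb'
      have hA : sat F b1 A := ih1 F hF b1 hb1
      have hB : sat F (F.mul b1 a) B := hlimp b1 hA
      apply ih2 F hF m
      apply covers_perm hF (toList_cons_perm B Γ').symm
      refine ⟨F.mul b1 a, b2, ?_, hB, hb2⟩
      have := htrans _ _ _ h1 (hbi _ _ _ _ (hrefl a) h2)
      have e1 : F.mul a (F.mul b1 b2) = F.mul (F.mul b1 a) b2 := by
        rw [← hassoc, hcomm a b1]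
      rwa [e1] at this
  | @limpR Γ A B _ ih =>
      intro F hF m hm n hn
      obtain ⟨hcomm, hassoc, hunit, hrefl, htrans, hbi, hV, hN⟩ := id hF
      apply ih F hF
      apply covers_perm hF (toList_cons_perm A Γ).symm
      exact ⟨n, m, hrefl _, hn, hm⟩
  | @andL1 Γ A B C _ ih =>
      intro F hF m hm
      have hm' := covers_perm hF (toList_cons_perm _ Γ) m hm
      obtain ⟨a, b, h1, ⟨hA, _⟩, h3⟩ := hm'
      exact ih F hF m (covers_perm hF (toList_cons_perm A Γ).symm _ ⟨a, b, h1, hA, h3⟩)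
  | @andL2 Γ A B C _ ih =>
      intro F hF m hm
      have hm' := covers_perm hF (toList_cons_perm _ Γ) m hm
      obtain ⟨a, b, h1, ⟨_, hB⟩, h3⟩ := hm'
      exact ih F hF m (covers_perm hF (toList_cons_perm B Γ).symm _ ⟨a, b, h1, hB, h3⟩)
  | @andR Γ A B _ _ ih1 ih2 =>
      intro F hF m hm
      exact ⟨ih1 F hF m hm, ih2 F hF m hm⟩
  | @oneL Γ C _ ih =>
      intro F hF m hm
      obtain ⟨hcomm, hassoc, hunit, hrefl, htrans, hbi, hV, hN⟩ := id hF
      have hm' := covers_perm hF (toList_cons_perm _ Γ) m hm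
      obtain ⟨a, b, h1, hone, h3⟩ := hm'
      have h4 : F.ge m (F.mul F.e b) := htrans _ _ _ h1 (hbi _ _ _ _ hone (hrefl b))
      have e1 : F.mul F.e b = b := by rw [hcomm, hunit]
      rw [e1] at h4
      exact ih F hF m (covers_mono hF Γ.toList h3 h4)
  | oneR =>
      intro F hF m hm
      simpa [Multiset.toList_zero, covers, sat] using hm
  | @boxRe A B _ _ ih1 ih2 =>
      intro F hF m hm
      obtain ⟨hcomm, hassoc, hunit, hrefl, htrans, hbi, hV, hN⟩ := id hF
      have hm' := covers_perm hF (toList_cons_perm _ 0) m hm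
      obtain ⟨a, b, h1, hbox, h3⟩ := hm'
      simp only [Multiset.toList_zero, covers] at h3
      have h4 : F.ge m (F.mul a F.e) := htrans _ _ _ h1 (hbi _ _ _ _ (hrefl a) h3)
      rw [hunit] at h4
      have hbox' : sat F m (Fm.box A) := heredity hF (Fm.box A) hbox h4
      have hset : {n | sat F n A} = {n | sat F n B} := by
        ext n
        constructor
        · intro hn; exact ih1 F hF n (covers_singleton hF hn)
        · intro hn; exact ih2 F hF n (covers_singleton hF hn)
      show {n | sat F n B} ∈ F.N m
      rw [← hset]
      exact hbox'

/-- soundness of the MILL sequent calculus: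
if Γ ⊢ A is derivable, then e ⊨ Γ* ⊸ A in every modal Kripke resource model. -/
theorem soundness (Γ : Multiset Fm) (A : Fm) (h : Der Γ A) :
    ∀ F : KFrame, IsMKRM F → sat F F.e (Fm.limp (star Γ) A) := by
  intro F hF
  obtain ⟨hcomm, hassoc, hunit, hrefl, htrans, hbi, hV, hN⟩ := id hF
  intro n hn
  rw [hunit]
  exact der_sound h F hF n ((sat_listStar hF Γ.toList n).mp hn)
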